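/- Fix a, b, c > 0 with a + b + c = 1. Define ν(z) = ζ(z)/z where ζ(z) = √(z²+z+1) + (1/2)·√((zb+zc+a+c)² − 4abz) + ((b−c)z − a − c)/2 − 1. Then lim_{z→0⁺} ν(z) = 1/2 + bc/(a+c) and lim_{z→∞} ν(z) = 1 + b. -/

import Mathlib

open Real Filter

/-- The function `ζ(z)` from the arctic-curve parametrization. -/
noncomputable def zeta (a b c z : ℝ) : ℝ :=
  Real.sqrt (z ^ 2 + z + 1) + Real.sqrt ((z * b + z * c + a + c) ^ 2 - 4 * a * b * z) / 2 +
    ((b - c) * z - a - c) / 2 - 1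

/-- `ν(z) = ζ(z)/z`. -/
noncomputable def nuFn (a b c z : ℝ) : ℝ := zeta a b c z / z

lemma Qnonneg (a b c z : ℝ) (ha : 0 < a) (hb : 0 < b) (hc : 0 < c) (hz : 0 < z) :
    0 ≤ (z * b + z * c + a + c) ^ 2 - 4 * a * b * z := by
  nlinarith [sq_nonneg (z * b - a), sq_nonneg (z * c + c), mul_pos hz hc, mul_pos hz hb,
    mul_pos ha hc, mul_pos (mul_pos hz hb) hc]

lemma zeta_zero (a b c : ℝ) (ha : 0 < a) (hc : 0 < c) : zeta a b c 0 = 0 := by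
  have h : ((0:ℝ) * b + 0 * c + a + c) ^ 2 - 4 * a * b * 0 = (a + c) ^ 2 := by ring
  simp only [zeta, h]
  rw [Real.sqrt_sq (by linarith)]
  norm_num
  ring

lemma zeta_hasDeriv (a b c : ℝ) (ha : 0 < a) (hb : 0 < b) (hc : 0 < c) :
    HasDerivAt (zeta a b c) (1 / 2 + (2 * (a + c) * (b + c) - 4 * a * b) / (4 * (a + c)) + (b - c) / 2) 0 := by
  have hp : HasDerivAt (fun z : ℝ => z ^ 2 + z + 1) 1 0 := by
    have := ((hasDerivAt_pow 2 (0:ℝ)).add (hasDerivAt_id 0)).add_const 1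
    simpa using this
  have hs1 : HasDerivAt (fun z : ℝ => Real.sqrt (z ^ 2 + z + 1)) (1 / 2) 0 := by
    have := hp.sqrt (by norm_num)
    simpa using this
  have hg : HasDerivAt (fun z : ℝ => z * b + z * c + a + c) (b + c) 0 := by
    have := ((((hasDerivAt_id (0:ℝ)).mul_const b).add ((hasDerivAt_id (0:ℝ)).mul_const c)).add_const a).add_const c
    simpa using this
  have hQ : HasDerivAt (fun z : ℝ => (z * b + z * c + a + c) ^ 2 - 4 * a * b * z)
      (2 * (a + c) * (b + c) - 4 * a * b) 0 := by
    have h2 := (hg.pow 2).sub (((hasDerivAt_id (0:ℝ)).const_mul (4 * a * b)))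
    have he : ((2:ℕ) : ℝ) * (0 * b + 0 * c + a + c) ^ (2 - 1) * (b + c) - 4 * a * b * 1
        = 2 * (a + c) * (b + c) - 4 * a * b := by push_cast; ring
    rw [he] at h2
    exact h2
  have hQ0 : ((0:ℝ) * b + 0 * c + a + c) ^ 2 - 4 * a * b * 0 = (a + c) ^ 2 := by ring
  have hs2 : HasDerivAt (fun z : ℝ => Real.sqrt ((z * b + z * c + a + c) ^ 2 - 4 * a * b * z) / 2)
      ((2 * (a + c) * (b + c) - 4 * a * b) / (4 * (a + c))) 0 := by
    have hne : ((0:ℝ) * b + 0 * c + a + c) ^ 2 - 4 * a * b * 0 ≠ 0 := by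
      rw [hQ0]; positivity
    have := (hQ.sqrt hne).div_const 2
    rw [hQ0, Real.sqrt_sq (by linarith)] at this
    rw [div_div] at this
    rw [show (2:ℝ) * (a + c) * 2 = 4 * (a + c) by ring] at this
    exact this
  have hlin : HasDerivAt (fun z : ℝ => ((b - c) * z - a - c) / 2 - 1) ((b - c) / 2) 0 := by
    have := ((((hasDerivAt_id (0:ℝ)).const_mul (b - c)).sub_const a).sub_const c).div_const 2
    simpa using (this.sub_const 1)
  have h := (hs1.add hs2).add hlin
  have hfun : (fun z : ℝ => Real.sqrt (z ^ 2 + z + 1) +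
      Real.sqrt ((z * b + z * c + a + c) ^ 2 - 4 * a * b * z) / 2 +
      (((b - c) * z - a - c) / 2 - 1)) = zeta a b c := by
    funext z
    simp only [zeta]
    ring
  rw [← hfun]
  exact h

lemma zeta_deriv_eq (a b c : ℝ) (ha : 0 < a) (hb : 0 < b) (hc : 0 < c) :
    1 / 2 + (2 * (a + c) * (b + c) - 4 * a * b) / (4 * (a + c)) + (b - c) / 2
      = 1 / 2 + b * c / (a + c) := by
  have hac : a + c ≠ 0 := by positivity
  field_simp
  ring

lemma sqrt1_div (z : ℝ) (hz : 0 < z) :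
    Real.sqrt (z ^ 2 + z + 1) / z = Real.sqrt (1 + 1 / z + 1 / z ^ 2) := by
  have h1 : (1 : ℝ) + 1 / z + 1 / z ^ 2 = (z ^ 2 + z + 1) / z ^ 2 := by
    field_simp
  rw [h1, Real.sqrt_div (by positivity), Real.sqrt_sq hz.le]

lemma sqrt2_div (a b c z : ℝ) (ha : 0 < a) (hb : 0 < b) (hc : 0 < c) (hz : 0 < z) :
    Real.sqrt ((z * b + z * c + a + c) ^ 2 - 4 * a * b * z) / z
      = Real.sqrt (((b + c) + (a + c) / z) ^ 2 - 4 * a * b / z) := by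
  have h1 : ((b + c) + (a + c) / z) ^ 2 - 4 * a * b / z
      = ((z * b + z * c + a + c) ^ 2 - 4 * a * b * z) / z ^ 2 := by
    field_simp
    ring
  rw [h1, Real.sqrt_div (Qnonneg a b c z ha hb hc hz), Real.sqrt_sq hz.le]

/-- `lim_{z→0⁺} ν(z) = 1/2 + bc/(a+c)` and `lim_{z→∞} ν(z) = 1 + b`. -/
theorem nu_limits (a b c : ℝ) (ha : 0 < a) (hb : 0 < b) (hc : 0 < c)
    (habc : a + b + c = 1) :
    Tendsto (nuFn a b c) (nhdsWithin 0 (Set.Ioi 0)) (nhds (1 / 2 + b * c / (a + c))) ∧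
    Tendsto (nuFn a b c) atTop (nhds (1 + b)) := by
  constructor
  · have hd := zeta_hasDeriv a b c ha hb hc
    rw [hasDerivAt_iff_tendsto_slope] at hd
    have hmono : Tendsto (slope (zeta a b c) 0) (nhdsWithin 0 (Set.Ioi 0))
        (nhds (1 / 2 + (2 * (a + c) * (b + c) - 4 * a * b) / (4 * (a + c)) + (b - c) / 2)) :=
      hd.mono_left (nhdsWithin_mono 0 (fun x hx => ne_of_gt hx))
    rw [zeta_deriv_eq a b c ha hb hc] at hmono
    refine hmono.congr' ?_
    filter_upwards [self_mem_nhdsWithin] with z hz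
    have hz0 : z ≠ 0 := ne_of_gt hz
    simp [slope, nuFn, zeta_zero a b c ha hc, div_eq_inv_mul]
  · have hinv : Tendsto (fun z : ℝ => 1 / z) atTop (nhds (0:ℝ)) := by
      simpa [one_div] using tendsto_inv_atTop_zero
    have t1 : Tendsto (fun z : ℝ => Real.sqrt (1 + 1 / z + 1 / z ^ 2)) atTop (nhds 1) := by
      have h1 : Tendsto (fun z : ℝ => 1 + 1 / z + 1 / z ^ 2) atTop (nhds (1 + 0 + 0 * 0)) := by
        refine ((tendsto_const_nhds.add hinv).add (hinv.mul hinv)).congr fun z => ?_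
        ring
      rw [show (1:ℝ) + 0 + 0 * 0 = 1 by norm_num] at h1
      have := (Real.continuous_sqrt.tendsto 1).comp h1
      simpa [Function.comp_def] using this
    have t2 : Tendsto (fun z : ℝ => Real.sqrt (((b + c) + (a + c) / z) ^ 2 - 4 * a * b / z))
        atTop (nhds (b + c)) := by
      have h1 : Tendsto (fun z : ℝ => ((b + c) + (a + c) / z) ^ 2 - 4 * a * b / z) atTop
          (nhds (((b + c) + (a + c) * 0) ^ 2 - 4 * a * b * 0)) := by
        refine (((tendsto_const_nhds.add (hinv.const_mul (a + c))).pow 2).sub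
          (hinv.const_mul (4 * a * b))).congr fun z => ?_
        ring
      rw [show ((b + c) + (a + c) * 0) ^ 2 - 4 * a * b * 0 = (b + c) ^ 2 by ring] at h1
      have := (Real.continuous_sqrt.tendsto ((b + c) ^ 2)).comp h1
      simpa [Function.comp_def, Real.sqrt_sq (by positivity : (0:ℝ) ≤ b + c)] using this
    have t3 : Tendsto (fun z : ℝ => Real.sqrt (1 + 1 / z + 1 / z ^ 2)
        + Real.sqrt (((b + c) + (a + c) / z) ^ 2 - 4 * a * b / z) / 2
        + ((b - c) - (a + c) * (1 / z)) / 2 - 1 / z) atTop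
        (nhds (1 + (b + c) / 2 + ((b - c) - (a + c) * 0) / 2 - 0)) := by
      exact ((t1.add (t2.div_const 2)).add
        (((tendsto_const_nhds.sub (hinv.const_mul (a + c))).div_const 2))).sub hinv
    rw [show (1:ℝ) + (b + c) / 2 + ((b - c) - (a + c) * 0) / 2 - 0 = 1 + b by ring] at t3
    refine t3.congr' ?_
    filter_upwards [eventually_gt_atTop (0:ℝ)] with z hz
    have hz0 : z ≠ 0 := ne_of_gt hz
    rw [← sqrt1_div z hz, ← sqrt2_div a b c z ha hb hc hz, nuFn, zeta]
    field_simp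
    ring
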